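/- arXiv:2311.08197 — 2 statements merged into one kernel-verified Lean document; each statement's English description precedes it below -/
import Mathlib

section
/- Let E and F be normed spaces, U ⊆ E open, and f : U → F a map that is Lipschitz continuous on U and Gateaux differentiable at a point x ∈ U. Then f is strongly Gateaux differentiable at x: for every C¹ curve γ : (-a, a) → U with γ(0) = x, the function s ↦ f(γ(s)) is differentiable at s = 0 with derivative df(x; γ'(0)). -/
open Filter Topology

/-- `f` is Gateaux differentiable at `x` with Gateaux derivative `df`:
for every direction `v` the limit `lim_{h→0} h⁻¹ (f (x + h v) - f x)` exists and equals `df v`. -/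
def GateauxDifferentiableAt {E F : Type*} [NormedAddCommGroup E] [NormedSpace ℝ E]
    [NormedAddCommGroup F] [NormedSpace ℝ F] (f : E → F) (x : E) (df : E → F) : Prop :=
  ∀ v : E, Tendsto (fun h : ℝ => h⁻¹ • (f (x + h • v) - f x)) (𝓝[≠] (0 : ℝ)) (𝓝 (df v))

/-- If `f : U → F` is Lipschitz on the open set `U` and Gateaux differentiable
at `x ∈ U`, then `f` is strongly Gateaux differentiable at `x`: for every `C¹` curve
`γ : (-a, a) → U` with `γ 0 = x` and `γ'(0) = v`, the map `s ↦ f (γ s)` is differentiable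
at `s = 0` with derivative `df (x; v)`. -/
theorem stmt0 {E F : Type*} [NormedAddCommGroup E] [NormedSpace ℝ E]
    [NormedAddCommGroup F] [NormedSpace ℝ F]
    (U : Set E) (hU : IsOpen U) (f : E → F) (x : E) (hx : x ∈ U)
    (L : NNReal) (hL : LipschitzOnWith L f U)
    (df : E → F) (hdf : GateauxDifferentiableAt f x df)
    (a : ℝ) (ha : 0 < a) (γ : ℝ → E)
    (hγ : ContDiffOn ℝ 1 γ (Set.Ioo (-a) a))
    (hγ0 : γ 0 = x) (hγU : Set.MapsTo γ (Set.Ioo (-a) a) U)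
    (v : E) (hv : HasDerivAt γ v 0) :
    HasDerivAt (fun s => f (γ s)) (df v) 0 := by
  rw [hasDerivAt_iff_tendsto_slope]
  have hv' : Tendsto (slope γ 0) (𝓝[≠] 0) (𝓝 v) := hasDerivAt_iff_tendsto_slope.mp hv
  -- eventually both points are in U
  have hmem : ∀ᶠ s in 𝓝[≠] (0:ℝ), γ s ∈ U ∧ x + s • v ∈ U := by
    have h1 : ∀ᶠ s in 𝓝 (0:ℝ), γ s ∈ U := by
      filter_upwards [Ioo_mem_nhds (neg_lt_zero.mpr ha) ha] with s hs using hγU hs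
    have h2 : ∀ᶠ s in 𝓝 (0:ℝ), x + s • v ∈ U := by
      have hc : Continuous (fun s : ℝ => x + s • v) := by continuity
      have : (fun s : ℝ => x + s • v) 0 ∈ U := by simpa using hx
      exact hc.continuousAt.eventually_mem (hU.mem_nhds this)
    exact nhdsWithin_le_nhds (h1.and h2)
  -- first term tends to 0
  have hA : Tendsto (fun s : ℝ => s⁻¹ • (f (γ s) - f (x + s • v))) (𝓝[≠] 0) (𝓝 0) := by
    have hg : Tendsto (fun s : ℝ => (L : ℝ) * ‖slope γ 0 s - v‖) (𝓝[≠] 0) (𝓝 0) := by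
      have := (hv'.sub_const v).norm.const_mul (L : ℝ)
      simpa using this
    refine squeeze_zero_norm' ?_ hg
    filter_upwards [hmem, self_mem_nhdsWithin] with s hs hs0
    have hs0' : (s : ℝ) ≠ 0 := hs0
    have hlip := hL.norm_sub_le hs.1 hs.2
    calc ‖s⁻¹ • (f (γ s) - f (x + s • v))‖
        = |s|⁻¹ * ‖f (γ s) - f (x + s • v)‖ := by
          rw [norm_smul, Real.norm_eq_abs, abs_inv]
      _ ≤ |s|⁻¹ * ((L : ℝ) * ‖γ s - (x + s • v)‖) := by
          gcongr
      _ = (L : ℝ) * ‖s⁻¹ • (γ s - (x + s • v))‖ := by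
          rw [norm_smul, Real.norm_eq_abs, abs_inv]; ring
      _ = (L : ℝ) * ‖slope γ 0 s - v‖ := by
          congr 1
          rw [slope_def_module, sub_zero, hγ0, smul_sub, smul_add, smul_smul,
            inv_mul_cancel₀ hs0', one_smul]
          congr 1
          rw [smul_sub]
          abel
  have hB : Tendsto (fun s : ℝ => s⁻¹ • (f (x + s • v) - f x)) (𝓝[≠] 0) (𝓝 (df v)) := hdf v
  have := hA.add hB
  rw [zero_add] at this
  refine this.congr' ?_
  filter_upwards [self_mem_nhdsWithin] with s hs
  rw [slope_def_module, sub_zero, hγ0, ← smul_add]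
  congr 1
  abel
end

section
/- Let η be a solution on [0, τ) of the stochastic Euler equation in Lagrangian form dη = B(η)dt + Σ(η)•dW on T Diff^s_μ(K) with π(η_0) = id. For every φ ∈ Diff^s_μ(K), almost surely the maximal existence times satisfy τ^{η_0} = τ^{η_0∘φ}, and η_t^{η_0} ∘ φ = η_t^{η_0∘φ} for all t ∈ [0, τ^{η_0}). -/
open MeasureTheory Set Filter Topology
open scoped Manifold ENNReal NNReal Classical

/-- An abstract Itô stochastic integral `ξ ↦ ∫₀^· ξ_s dW_s` with respect to a Wiener process
with values in `E`, acting on operator-valued integrands with values in an arbitrary normed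
space, together with its basic properties (path continuity and localization). -/
structure StochasticIntegral (Ω : Type) [m0 : MeasurableSpace Ω] (μ : Measure Ω)
    (ℱ : Filtration ℝ m0) (E : Type) [NormedAddCommGroup E] [NormedSpace ℝ E] where
  SI : ∀ (G : Type) [NormedAddCommGroup G] [NormedSpace ℝ G],
    (ℝ → Ω → (E →L[ℝ] G)) → ℝ → Ω → G
  cont : ∀ (G : Type) [NormedAddCommGroup G] [NormedSpace ℝ G]
    (ξ : ℝ → Ω → (E →L[ℝ] G)), ∀ᵐ ω ∂μ, Continuous fun t => SI G ξ t ω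
  localization : ∀ (G : Type) [NormedAddCommGroup G] [NormedSpace ℝ G]
    (ξ₁ ξ₂ : ℝ → Ω → (E →L[ℝ] G)) (σc : Ω → ℝ),
    (∀ᵐ ω ∂μ, ∀ s ∈ Icc (0 : ℝ) (σc ω), ξ₁ s ω = ξ₂ s ω) →
    ∀ᵐ ω ∂μ, ∀ t ∈ Icc (0 : ℝ) (σc ω), SI G ξ₁ t ω = SI G ξ₂ t ω

variable {Ω : Type} [m0 : MeasurableSpace Ω] {μ : Measure Ω} {ℱ : Filtration ℝ m0}
variable {E : Type} [NormedAddCommGroup E] [NormedSpace ℝ E]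

section ManifoldSDE

variable {Hm : Type} [NormedAddCommGroup Hm] [InnerProductSpace ℝ Hm]
variable {M : Type} [TopologicalSpace M] [ChartedSpace Hm M]
  [IsManifold (𝓘(ℝ, Hm)) (⊤ : ℕ∞) M]

/-- The trace term `tr_𝓗[D(Dh ∘ σ) ∘ σ](x) = Σ_k [D(Dh ∘ σ)(x) (σ(x) e_k)] (e_k)` appearing
in the definition of a solution of a Stratonovich SDE on a manifold, where `(e_k)` is an
orthonormal basis of the RKHS of the noise. -/
noncomputable def itoTrace (e : ℕ → E) (σ : M → (E →L[ℝ] Hm))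
    {G : Type} [NormedAddCommGroup G] [NormedSpace ℝ G] (h : M → G) (x : M) : G :=
  tsum fun k : ℕ =>
    (show E →L[ℝ] G from
      mfderiv (𝓘(ℝ, Hm)) (𝓘(ℝ, E →L[ℝ] G))
        (fun y : M => show E →L[ℝ] G from
          (mfderiv (𝓘(ℝ, Hm)) (𝓘(ℝ, G)) h y).comp (σ y))
        x (σ x (e k))) (e k)

/-- `X` is a local solution on `[ρ, τ)` of the Stratonovich SDE
`dX = b(X) dt + σ(X) • dW`, `X_ρ = ζ`, on the Hilbert manifold `M`: `X` is an adapted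
process with continuous paths such that for every `C²` function `h : M → G` into a separable
Hilbert space the Itô-type identity
`h(X_t) = h(ζ) + ∫_ρ^t Dh∘b(X_r) dr + ∫_ρ^t Dh∘σ(X_r) dW_r
  + ½ ∫_ρ^t tr_𝓗[D(Dh∘σ)∘σ(X_r)] dr`
holds almost surely for all `t ∈ [ρ, τ)`.  (The coefficients are expressed in the canonical
trivialization `TangentSpace 𝓘(ℝ, Hm) x = Hm`.) -/
def IsLocalSolution (J : StochasticIntegral Ω μ ℱ E) (e : ℕ → E)
    (b : M → Hm) (σ : M → (E →L[ℝ] Hm))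
    (ρ : Ω → ℝ) (ζ : Ω → M) (τ : Ω → ℝ≥0∞) (X : ℝ → Ω → M) : Prop :=
  StronglyAdapted ℱ X ∧
  (∀ᵐ ω ∂μ, ContinuousOn (fun t => X t ω) {t : ℝ | ρ ω ≤ t ∧ ENNReal.ofReal t < τ ω}) ∧
  (∀ᵐ ω ∂μ, X (ρ ω) ω = ζ ω) ∧
  ∀ (G : Type) [NormedAddCommGroup G] [InnerProductSpace ℝ G] [CompleteSpace G]
    [SecondCountableTopology G],
    ∀ h : M → G, ContMDiff (𝓘(ℝ, Hm)) (𝓘(ℝ, G)) 2 h →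
    ∀ᵐ ω ∂μ, ∀ t, ρ ω ≤ t → ENNReal.ofReal t < τ ω →
      h (X t ω) = h (ζ ω)
        + (∫ r in (ρ ω)..t,
            show G from mfderiv (𝓘(ℝ, Hm)) (𝓘(ℝ, G)) h (X r ω) (b (X r ω)))
        + J.SI G (fun r ω' =>
            if ρ ω' ≤ r ∧ ENNReal.ofReal r < τ ω' then
              show E →L[ℝ] G from
                (mfderiv (𝓘(ℝ, Hm)) (𝓘(ℝ, G)) h (X r ω')).comp (σ (X r ω'))
            else 0) t ω
        + (2 : ℝ)⁻¹ • (∫ r in (ρ ω)..t, itoTrace e σ h (X r ω))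

/-- The partial order on local solutions:
`(X₁, τ₁) ⪯ (X₂, τ₂)` iff a.s. `τ₁ ≤ τ₂` and `X₁ = X₂` on `[ρ, τ₁)`. -/
def SolLE (ρ : Ω → ℝ) (X₁ : ℝ → Ω → M) (τ₁ : Ω → ℝ≥0∞)
    (X₂ : ℝ → Ω → M) (τ₂ : Ω → ℝ≥0∞) : Prop :=
  ∀ᵐ ω ∂μ, τ₁ ω ≤ τ₂ ω ∧ ∀ t, ρ ω ≤ t → ENNReal.ofReal t < τ₁ ω → X₁ t ω = X₂ t ω

end ManifoldSDE

section Aux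

variable {Hm : Type} [NormedAddCommGroup Hm] [InnerProductSpace ℝ Hm]
variable {M : Type} [TopologicalSpace M] [ChartedSpace Hm M]
  [IsManifold (𝓘(ℝ, Hm)) (⊤ : ℕ∞) M]

/-- Transport of a local solution along an equivariant `C²` diffeomorphism. -/
theorem transport_sol (J : StochasticIntegral Ω μ ℱ E) (e : ℕ → E)
    (b : M → Hm) (σ : M → (E →L[ℝ] Hm))
    (Rφ Rψ : M → M)
    (hRφ : ContMDiff (𝓘(ℝ, Hm)) (𝓘(ℝ, Hm)) 2 Rφ)
    (hRψ : ContMDiff (𝓘(ℝ, Hm)) (𝓘(ℝ, Hm)) 2 Rψ)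
    (hinv₁ : ∀ x, Rψ (Rφ x) = x) (hinv₂ : ∀ x, Rφ (Rψ x) = x)
    (hbequiv : ∀ x : M,
      (show Hm from mfderiv (𝓘(ℝ, Hm)) (𝓘(ℝ, Hm)) Rφ x (b x)) = b (Rφ x))
    (hσequiv : ∀ (x : M) (w : E),
      (show Hm from mfderiv (𝓘(ℝ, Hm)) (𝓘(ℝ, Hm)) Rφ x (σ x w)) = σ (Rφ x) w)
    (ρ : Ω → ℝ) (ζ : Ω → M) (τ : Ω → ℝ≥0∞) (X : ℝ → Ω → M)
    (hX : IsLocalSolution J e b σ ρ ζ τ X) :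
    IsLocalSolution J e b σ ρ (fun ω => Rφ (ζ ω)) τ (fun t ω => Rφ (X t ω)) := by
  obtain ⟨had, hcont, hinit, hmain⟩ := hX
  have hbe : ∀ x : M, mfderiv (𝓘(ℝ, Hm)) (𝓘(ℝ, Hm)) Rφ x (b x) = b (Rφ x) := hbequiv
  have hσe : ∀ (x : M) (w : E),
      mfderiv (𝓘(ℝ, Hm)) (𝓘(ℝ, Hm)) Rφ x (σ x w) = σ (Rφ x) w := hσequiv
  have hRφd : ∀ x, MDifferentiableAt (𝓘(ℝ, Hm)) (𝓘(ℝ, Hm)) Rφ x :=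
    fun x => hRφ.mdifferentiableAt two_ne_zero
  have hRψd : ∀ x, MDifferentiableAt (𝓘(ℝ, Hm)) (𝓘(ℝ, Hm)) Rψ x :=
    fun x => hRψ.mdifferentiableAt two_ne_zero
  have keyσ : ∀ x : M,
      (mfderiv (𝓘(ℝ, Hm)) (𝓘(ℝ, Hm)) Rφ x).comp (σ x) = σ (Rφ x) :=
    fun x => ContinuousLinearMap.ext (hσe x)
  refine ⟨fun t => hRφ.continuous.comp_stronglyMeasurable (had t), ?_, ?_, ?_⟩
  · filter_upwards [hcont] with ω hc
    exact hRφ.continuous.comp_continuousOn hc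
  · filter_upwards [hinit] with ω h0
    simp only [h0]
  · intro G _ _ _ _ h hh
    have hhd : ∀ x, MDifferentiableAt (𝓘(ℝ, Hm)) (𝓘(ℝ, G)) h x :=
      fun x => hh.mdifferentiableAt two_ne_zero
    have key1 : ∀ x : M,
        mfderiv (𝓘(ℝ, Hm)) (𝓘(ℝ, G)) (fun y => h (Rφ y)) x
          = (mfderiv (𝓘(ℝ, Hm)) (𝓘(ℝ, G)) h (Rφ x)).comp
              (mfderiv (𝓘(ℝ, Hm)) (𝓘(ℝ, Hm)) Rφ x) :=
      fun x => mfderiv_comp x (hhd (Rφ x)) (hRφd x)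
    have key3 : ∀ x : M,
        (mfderiv (𝓘(ℝ, Hm)) (𝓘(ℝ, G)) (fun y => h (Rφ y)) x).comp (σ x)
          = (mfderiv (𝓘(ℝ, Hm)) (𝓘(ℝ, G)) h (Rφ x)).comp (σ (Rφ x)) := by
      intro x
      rw [key1]
      ext v
      exact congrArg (fun w => mfderiv (𝓘(ℝ, Hm)) (𝓘(ℝ, G)) h (Rφ x) w) (hσe x v)
    have keyb : ∀ x : M,
        mfderiv (𝓘(ℝ, Hm)) (𝓘(ℝ, G)) (fun y => h (Rφ y)) x (b x)
          = mfderiv (𝓘(ℝ, Hm)) (𝓘(ℝ, G)) h (Rφ x) (b (Rφ x)) := by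
      intro x
      rw [key1]
      exact congrArg (fun w => mfderiv (𝓘(ℝ, Hm)) (𝓘(ℝ, G)) h (Rφ x) w) (hbe x)
    have keytr : ∀ x : M,
        itoTrace e σ (fun y => h (Rφ y)) x = itoTrace e σ h (Rφ x) := by
      intro x
      unfold itoTrace
      refine tsum_congr fun k => ?_
      set F : M → (E →L[ℝ] G) :=
        fun y => (mfderiv (𝓘(ℝ, Hm)) (𝓘(ℝ, G)) h y).comp (σ y) with hF
      have hFun : (fun y : M =>
          (mfderiv (𝓘(ℝ, Hm)) (𝓘(ℝ, G)) (fun z => h (Rφ z)) y).comp (σ y))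
            = fun y => F (Rφ y) := funext fun y => key3 y
      rw [hFun]
      by_cases hd : MDifferentiableAt (𝓘(ℝ, Hm)) (𝓘(ℝ, E →L[ℝ] G)) F (Rφ x)
      · have hm : mfderiv (𝓘(ℝ, Hm)) (𝓘(ℝ, E →L[ℝ] G)) (fun y => F (Rφ y)) x
            = (mfderiv (𝓘(ℝ, Hm)) (𝓘(ℝ, E →L[ℝ] G)) F (Rφ x)).comp
                (mfderiv (𝓘(ℝ, Hm)) (𝓘(ℝ, Hm)) Rφ x) :=
          mfderiv_comp x hd (hRφd x)
        have hm2 : mfderiv (𝓘(ℝ, Hm)) (𝓘(ℝ, E →L[ℝ] G)) (fun y => F (Rφ y)) x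
              (σ x (e k))
            = mfderiv (𝓘(ℝ, Hm)) (𝓘(ℝ, E →L[ℝ] G)) F (Rφ x) (σ (Rφ x) (e k)) := by
          refine (congrArg (fun L => L (σ x (e k))) hm).trans ?_
          exact congrArg (fun v => mfderiv (𝓘(ℝ, Hm)) (𝓘(ℝ, E →L[ℝ] G)) F (Rφ x) v)
            (hσe x (e k))
        exact congrArg (fun L : E →L[ℝ] G => L (e k)) hm2
      · have h1 : mfderiv (𝓘(ℝ, Hm)) (𝓘(ℝ, E →L[ℝ] G)) F (Rφ x) = 0 :=
          mfderiv_zero_of_not_mdifferentiableAt hd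
        have h2 : ¬ MDifferentiableAt (𝓘(ℝ, Hm)) (𝓘(ℝ, E →L[ℝ] G))
            (fun y => F (Rφ y)) x := by
          intro hc
          apply hd
          have hFeq : F = (fun y => F (Rφ y)) ∘ Rψ := funext fun y => by
            simp only [Function.comp_apply, hinv₂]
          rw [hFeq]
          exact MDifferentiableAt.comp (Rφ x) (by rw [hinv₁]; exact hc) (hRψd (Rφ x))
        rw [mfderiv_zero_of_not_mdifferentiableAt h2, h1]
        rfl
    have hω' := hmain G (fun y => h (Rφ y)) (hh.comp hRφ)
    filter_upwards [hω'] with ω hω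
    intro t ht hτ
    have hξ : (fun (r : ℝ) (ω' : Ω) =>
          if ρ ω' ≤ r ∧ ENNReal.ofReal r < τ ω' then
            show E →L[ℝ] G from
              (mfderiv (𝓘(ℝ, Hm)) (𝓘(ℝ, G)) (fun y => h (Rφ y)) (X r ω')).comp
                (σ (X r ω'))
          else 0)
        = (fun (r : ℝ) (ω' : Ω) =>
          if ρ ω' ≤ r ∧ ENNReal.ofReal r < τ ω' then
            show E →L[ℝ] G from
              (mfderiv (𝓘(ℝ, Hm)) (𝓘(ℝ, G)) h (Rφ (X r ω'))).comp (σ (Rφ (X r ω')))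
          else 0) := by
      funext r ω'
      split
      · exact key3 (X r ω')
      · rfl
    have hω2 := hω t ht hτ
    rw [hξ] at hω2
    simp only [keyb, keytr] at hω2
    exact hω2

end Aux

/-- Equivariance of the stochastic Euler equation in Lagrangian form.
Here `M` plays the role of `T Diff^s_μ(K)` (a separable Hilbert manifold), `b` the role of
the Ebin–Marsden geodesic spray `B` of the right-invariant `L²` metric, and `σ` the role of
the (vertical-lift) diffusion coefficient `Σ`.  For a volume-preserving diffeomorphism
`φ ∈ Diff^s_μ(K)`, `Rφ : M → M` is the `C²` right-translation `V ↦ V ∘ φ` (with inverse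
`Rψ : V ↦ V ∘ φ⁻¹`), under which both coefficients are equivariant
(`B(V) ∘ φ = B(V ∘ φ)` and `[Σ(V) ∘ φ] w = Σ(V ∘ φ) w`).
If `η = η^{η₀}` is the maximal solution with initial datum `η₀` and lifetime `τ^{η₀}`, and
`η^{η₀ ∘ φ}` is the maximal solution with initial datum `η₀ ∘ φ` and lifetime `τ^{η₀ ∘ φ}`,
then almost surely `τ^{η₀} = τ^{η₀ ∘ φ}` and
`η_t^{η₀} ∘ φ = η_t^{η₀ ∘ φ}` for all `t ∈ [0, τ^{η₀})`. -/
theorem stmt16 {Ω : Type} [m0 : MeasurableSpace Ω] {μ : Measure Ω} [IsProbabilityMeasure μ]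
    {ℱ : Filtration ℝ m0}
    {E : Type} [NormedAddCommGroup E] [NormedSpace ℝ E]
    {Hm : Type} [NormedAddCommGroup Hm] [InnerProductSpace ℝ Hm] [CompleteSpace Hm]
    [SecondCountableTopology Hm]
    {M : Type} [TopologicalSpace M] [ChartedSpace Hm M] [T2Space M]
    [SecondCountableTopology M] [IsManifold (𝓘(ℝ, Hm)) (⊤ : ℕ∞) M]
    (J : StochasticIntegral Ω μ ℱ E) (e : ℕ → E)
    (b : M → Hm) (σ : M → (E →L[ℝ] Hm))
    -- the right translation `Rφ : V ↦ V ∘ φ` and its inverse `Rψ : V ↦ V ∘ φ⁻¹`,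
    -- both of class `C²`
    (Rφ Rψ : M → M)
    (hRφ : ContMDiff (𝓘(ℝ, Hm)) (𝓘(ℝ, Hm)) 2 Rφ)
    (hRψ : ContMDiff (𝓘(ℝ, Hm)) (𝓘(ℝ, Hm)) 2 Rψ)
    (hinv₁ : ∀ x, Rψ (Rφ x) = x) (hinv₂ : ∀ x, Rφ (Rψ x) = x)
    -- right-equivariance of the drift (geodesic spray): `B(V) ∘ φ = B(V ∘ φ)`
    (hbequiv : ∀ x : M,
      (show Hm from mfderiv (𝓘(ℝ, Hm)) (𝓘(ℝ, Hm)) Rφ x (b x)) = b (Rφ x))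
    -- right-equivariance of the diffusion coefficient: `[Σ(V) ∘ φ] w = Σ(V ∘ φ) w`
    (hσequiv : ∀ (x : M) (w : E),
      (show Hm from mfderiv (𝓘(ℝ, Hm)) (𝓘(ℝ, Hm)) Rφ x (σ x w)) = σ (Rφ x) w)
    -- `η` is the maximal solution with initial datum `η₀` (at time `0`)
    (η₀ : Ω → M) (τX : Ω → ℝ≥0∞) (X : ℝ → Ω → M)
    (hX : IsLocalSolution J e b σ (fun _ => (0 : ℝ)) η₀ τX X)
    (hXmax : ∀ (Z : ℝ → Ω → M) (τZ : Ω → ℝ≥0∞),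
      IsLocalSolution J e b σ (fun _ => (0 : ℝ)) η₀ τZ Z →
      SolLE (μ := μ) (fun _ => (0 : ℝ)) Z τZ X τX)
    -- `Y` is the maximal solution with initial datum `η₀ ∘ φ`
    (τY : Ω → ℝ≥0∞) (Y : ℝ → Ω → M)
    (hY : IsLocalSolution J e b σ (fun _ => (0 : ℝ)) (fun ω => Rφ (η₀ ω)) τY Y)
    (hYmax : ∀ (Z : ℝ → Ω → M) (τZ : Ω → ℝ≥0∞),
      IsLocalSolution J e b σ (fun _ => (0 : ℝ)) (fun ω => Rφ (η₀ ω)) τZ Z →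
      SolLE (μ := μ) (fun _ => (0 : ℝ)) Z τZ Y τY) :
    ∀ᵐ ω ∂μ, τX ω = τY ω ∧
      ∀ t : ℝ, 0 ≤ t → ENNReal.ofReal t < τX ω → Rφ (X t ω) = Y t ω := by
  have hbe : ∀ x : M, mfderiv (𝓘(ℝ, Hm)) (𝓘(ℝ, Hm)) Rφ x (b x) = b (Rφ x) := hbequiv
  have hσe : ∀ (x : M) (w : E),
      mfderiv (𝓘(ℝ, Hm)) (𝓘(ℝ, Hm)) Rφ x (σ x w) = σ (Rφ x) w := hσequiv
  -- `Rφ ∘ X` is a solution with initial datum `Rφ ∘ η₀`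
  have hZ := transport_sol J e b σ Rφ Rψ hRφ hRψ hinv₁ hinv₂ hbequiv hσequiv
    (fun _ => (0 : ℝ)) η₀ τX X hX
  have hZY := hYmax _ _ hZ
  -- derive the equivariance of `b` and `σ` under `Rψ`
  have hRφd : ∀ x, MDifferentiableAt (𝓘(ℝ, Hm)) (𝓘(ℝ, Hm)) Rφ x :=
    fun x => hRφ.mdifferentiableAt two_ne_zero
  have hRψd : ∀ x, MDifferentiableAt (𝓘(ℝ, Hm)) (𝓘(ℝ, Hm)) Rψ x :=
    fun x => hRψ.mdifferentiableAt two_ne_zero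
  have hleft : ∀ (y : M) (v : Hm),
      mfderiv (𝓘(ℝ, Hm)) (𝓘(ℝ, Hm)) Rψ (Rφ y)
        (mfderiv (𝓘(ℝ, Hm)) (𝓘(ℝ, Hm)) Rφ y v) = v := by
    intro y v
    have hcomp : mfderiv (𝓘(ℝ, Hm)) (𝓘(ℝ, Hm)) (Rψ ∘ Rφ) y
        = (mfderiv (𝓘(ℝ, Hm)) (𝓘(ℝ, Hm)) Rψ (Rφ y)).comp
            (mfderiv (𝓘(ℝ, Hm)) (𝓘(ℝ, Hm)) Rφ y) :=
      mfderiv_comp y (hRψd (Rφ y)) (hRφd y)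
    have hid : (Rψ ∘ Rφ) = (id : M → M) := funext fun z => hinv₁ z
    rw [hid, mfderiv_id] at hcomp
    have := congrArg (fun (L : Hm →L[ℝ] Hm) => L v) hcomp.symm
    exact this
  have hbequiv' : ∀ x : M,
      (show Hm from mfderiv (𝓘(ℝ, Hm)) (𝓘(ℝ, Hm)) Rψ x (b x)) = b (Rψ x) := by
    intro x
    have h1 := hbe (Rψ x)
    rw [hinv₂] at h1
    have h2 := hleft (Rψ x) (b (Rψ x))
    rw [hinv₂, h1] at h2
    exact h2
  have hσequiv' : ∀ (x : M) (w : E),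
      (show Hm from mfderiv (𝓘(ℝ, Hm)) (𝓘(ℝ, Hm)) Rψ x (σ x w)) = σ (Rψ x) w := by
    intro x w
    have h1 := hσe (Rψ x) w
    rw [hinv₂] at h1
    have h2 := hleft (Rψ x) (σ (Rψ x) w)
    rw [hinv₂, h1] at h2
    exact h2
  -- `Rψ ∘ Y` is a solution with initial datum `η₀`
  have hW := transport_sol J e b σ Rψ Rφ hRψ hRφ hinv₂ hinv₁ hbequiv' hσequiv'
    (fun _ => (0 : ℝ)) (fun ω => Rφ (η₀ ω)) τY Y hY
  have hWinit : (fun ω => Rψ (Rφ (η₀ ω))) = η₀ := funext fun ω => hinv₁ (η₀ ω)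
  rw [hWinit] at hW
  have hWX := hXmax _ _ hW
  filter_upwards [hZY, hWX] with ω h1 h2
  exact ⟨le_antisymm h1.1 h2.1, fun t ht hτ => h1.2 t ht hτ⟩
end
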